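/- Define g_y(u) := exp(-(1/2)‖y - G(u)‖_Γ²) and g̃_y(u) := ∫_A exp(-(1/2)‖y - G^a(u)‖_Γ²) dν_a(a). There exists a constant C > 0, depending only on Γ but not on ε, y, u or the family {G^a}, such that for every ε > 0 and every u ∈ U: if ‖G^a(u) - G(u)‖ < ε for ν_a-almost every a ∈ A, then |g̃_y(u) - g_y(u)| ≤ Cε. -/

import Mathlib

open MeasureTheory Matrix

/-- The squared weighted norm `‖x‖_Γ² = ‖Γ^{-1/2} x‖² = xᵀ Γ⁻¹ x` associated to a
positive definite covariance matrix `Γ`. -/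
noncomputable def wSq {m : ℕ} (Γ : Matrix (Fin m) (Fin m) ℝ) (v : EuclideanSpace ℝ (Fin m)) : ℝ :=
  (fun i => v i) ⬝ᵥ Γ⁻¹.mulVec (fun i => v i)

private lemma philip4 : LipschitzWith 1 (fun t : ℝ => Real.exp (-(1/2) * t^2)) := by
  apply lipschitzWith_of_nnnorm_deriv_le
  · intro x
    have : DifferentiableAt ℝ (fun t : ℝ => Real.exp (-(1/2) * t^2)) x := by fun_prop
    exact this
  · intro x
    have h : deriv (fun t : ℝ => Real.exp (-(1/2) * t^2)) x
        = Real.exp (-(1/2) * x^2) * (-(1/2) * (2*x)) := by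
      have h1 : HasDerivAt (fun t : ℝ => -(1/2) * t^2) (-(1/2) * (2*x)) x := by
        simpa using ((hasDerivAt_pow 2 x).const_mul (-(1/2):ℝ))
      exact ((h1.exp)).deriv
    rw [← NNReal.coe_le_coe]
    push_cast
    rw [h]
    have h2 : |x| ≤ Real.exp (x^2/2) := by
      have := Real.add_one_le_exp (x^2/2)
      nlinarith [sq_nonneg (|x| - 1), sq_abs x]
    have h3 : Real.exp (-(1/2)*x^2) = (Real.exp (x^2/2))⁻¹ := by
      rw [← Real.exp_neg]; ring_nf
    have h4 : Real.exp (-(1/2)*x^2) * (-(1/2) * (2*x)) = -(x * Real.exp (-(1/2)*x^2)) := by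
      ring
    rw [h4, Real.norm_eq_abs, abs_neg, abs_mul, abs_of_pos (Real.exp_pos _), h3]
    have hpos : (0:ℝ) < Real.exp (x^2/2) := Real.exp_pos _
    calc |x| * (Real.exp (x^2/2))⁻¹ ≤ Real.exp (x^2/2) * (Real.exp (x^2/2))⁻¹ :=
          mul_le_mul_of_nonneg_right h2 (le_of_lt (inv_pos.2 hpos))
      _ = 1 := mul_inv_cancel₀ (ne_of_gt hpos)

theorem stmt4 {m : ℕ} (Γ : Matrix (Fin m) (Fin m) ℝ) (hΓ : Γ.PosDef)
    {U A : Type*} [MeasurableSpace U] [MeasurableSpace A] :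
    ∃ C > (0 : ℝ),
      ∀ (νa : Measure A), IsProbabilityMeasure νa →
      ∀ (G : U → EuclideanSpace ℝ (Fin m)) (Ga : A → U → EuclideanSpace ℝ (Fin m)),
        Measurable G → Measurable (fun p : U × A => Ga p.2 p.1) →
      ∀ (ε : ℝ), 0 < ε → ∀ (y : EuclideanSpace ℝ (Fin m)) (u : U),
        (∀ᵐ a ∂νa, ‖Ga a u - G u‖ < ε) →
        |(∫ a, Real.exp (-(1/2) * wSq Γ (y - Ga a u)) ∂νa)
            - Real.exp (-(1/2) * wSq Γ (y - G u))| ≤ C * ε := by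
  have hinv : (Γ⁻¹).PosDef := hΓ.inv
  set S : Matrix (Fin m) (Fin m) ℝ := (open scoped MatrixOrder in CFC.sqrt Γ⁻¹) with hSdef
  have hSh : S.IsHermitian := (open scoped MatrixOrder in (CFC.sqrt_nonneg Γ⁻¹).posSemidef.1)
  have hSS : S * S = Γ⁻¹ := (open scoped MatrixOrder in CFC.sqrt_mul_sqrt_self _ hinv.posSemidef.nonneg)
  set T : EuclideanSpace ℝ (Fin m) →L[ℝ] EuclideanSpace ℝ (Fin m) :=
    LinearMap.toContinuousLinearMap (Matrix.toEuclideanLin S) with hTdef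
  -- key identity: wSq Γ v = ‖T v‖ ^ 2
  have hkey : ∀ v : EuclideanSpace ℝ (Fin m), wSq Γ v = ‖T v‖ ^ 2 := by
    intro v
    have hTv : ∀ i, (T v) i = (S *ᵥ (fun i => v i)) i := by
      intro i
      rfl
    have h1 : wSq Γ v = (S *ᵥ (fun i => v i)) ⬝ᵥ (S *ᵥ (fun i => v i)) := by
      unfold wSq
      rw [← hSS, ← Matrix.mulVec_mulVec, Matrix.dotProduct_mulVec, ← Matrix.mulVec_transpose]
      have : Sᵀ = S := by
        have := hSh
        rwa [Matrix.IsHermitian, Matrix.conjTranspose_eq_transpose_of_trivial] at this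
      rw [this]
    have h2 : ‖T v‖ ^ 2 = ∑ i, (T v) i * (T v) i := by
      rw [← real_inner_self_eq_norm_sq]
      rw [PiLp.inner_apply]
      simp only [RCLike.inner_apply, conj_trivial]
    rw [h1, h2]
    simp only [hTv]
    rfl
  have hnonneg : ∀ v : EuclideanSpace ℝ (Fin m), 0 ≤ wSq Γ v := by
    intro v; rw [hkey]; positivity
  -- Lipschitz bound for v ↦ exp(-(1/2) wSq Γ v)
  set C : ℝ := ‖T‖ + 1 with hCdef
  have hC : 0 < C := by positivity
  have hLip : ∀ v w : EuclideanSpace ℝ (Fin m),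
      |Real.exp (-(1/2) * wSq Γ v) - Real.exp (-(1/2) * wSq Γ w)| ≤ C * ‖v - w‖ := by
    intro v w
    have h1 : |Real.exp (-(1/2) * wSq Γ v) - Real.exp (-(1/2) * wSq Γ w)|
        ≤ |‖T v‖ - ‖T w‖| := by
      rw [hkey v, hkey w]
      have := philip4.dist_le_mul ‖T v‖ ‖T w‖
      simpa [Real.dist_eq] using this
    have h2 : |‖T v‖ - ‖T w‖| ≤ ‖T v - T w‖ := abs_norm_sub_norm_le _ _
    have h3 : ‖T v - T w‖ ≤ ‖T‖ * ‖v - w‖ := by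
      rw [← map_sub]; exact T.le_opNorm _
    have h4 : ‖T‖ * ‖v - w‖ ≤ C * ‖v - w‖ := by
      apply mul_le_mul_of_nonneg_right _ (norm_nonneg _)
      rw [hCdef]; linarith
    exact h1.trans (h2.trans (h3.trans h4))
  refine ⟨C, hC, ?_⟩
  intro νa hνa G Ga hG hGa ε hε y u hae
  -- measurability and integrability
  have hmeas : Measurable (fun a => Real.exp (-(1/2) * wSq Γ (y - Ga a u))) := by
    have hm1 : Measurable (fun a => Ga a u) :=
      hGa.comp (measurable_const.prodMk measurable_id)
    have hcont : Continuous (fun v : EuclideanSpace ℝ (Fin m) =>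
        Real.exp (-(1/2) * wSq Γ v)) := by
      have : (fun v : EuclideanSpace ℝ (Fin m) => Real.exp (-(1/2) * wSq Γ v))
          = fun v => Real.exp (-(1/2) * ‖T v‖ ^ 2) := by
        funext v; rw [hkey]
      rw [this]
      fun_prop
    exact hcont.measurable.comp (measurable_const.sub hm1)
  have hbd : ∀ a, |Real.exp (-(1/2) * wSq Γ (y - Ga a u))| ≤ 1 := by
    intro a
    rw [abs_of_pos (Real.exp_pos _)]
    apply Real.exp_le_one_iff.2
    have := hnonneg (y - Ga a u)
    linarith
  have hint : Integrable (fun a => Real.exp (-(1/2) * wSq Γ (y - Ga a u))) νa := by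
    apply Integrable.mono' (integrable_const (1:ℝ)) hmeas.aestronglyMeasurable
    filter_upwards with a
    rw [Real.norm_eq_abs]; exact hbd a
  -- main estimate
  have hsplit : (∫ a, Real.exp (-(1/2) * wSq Γ (y - Ga a u)) ∂νa)
      - Real.exp (-(1/2) * wSq Γ (y - G u))
      = ∫ a, (Real.exp (-(1/2) * wSq Γ (y - Ga a u))
          - Real.exp (-(1/2) * wSq Γ (y - G u))) ∂νa := by
    rw [integral_sub hint (integrable_const _), integral_const]
    simp
  rw [hsplit, ← Real.norm_eq_abs]
  have : ∫ _, C * ε ∂νa = C * ε := by simp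
  rw [← this]
  apply norm_integral_le_of_norm_le (integrable_const _)
  filter_upwards [hae] with a ha
  rw [Real.norm_eq_abs]
  calc |Real.exp (-(1/2) * wSq Γ (y - Ga a u)) - Real.exp (-(1/2) * wSq Γ (y - G u))|
      ≤ C * ‖(y - Ga a u) - (y - G u)‖ := hLip _ _
    _ = C * ‖Ga a u - G u‖ := by rw [show (y - Ga a u) - (y - G u) = -(Ga a u - G u) by abel, norm_neg]
    _ ≤ C * ε := mul_le_mul_of_nonneg_left ha.le hC.le
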